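/- Let g be an even function defined near 0 in ℂ (g(−z) = g(z)) and p(ζ₁, ζ₂) a polynomial such that for all functions R with R(z) = o(g(z)), both Im p(z, z̄ + g(z) + R(z)) > 0 and Im p(z, z̄ − g(z) + R(z)) < 0 hold for all z ≠ 0 sufficiently close to 0. Then the odd part q of p (i.e., q(ζ) = (p(ζ) − p(−ζ))/2, the sum of the homogeneous components of p of odd degree) satisfies the same property: for all R with R(z) = o(g(z)), Im q(z, z̄ + g(z) + R(z)) > 0 and Im q(z, z̄ − g(z) + R(z)) < 0 for all z ≠ 0 sufficiently close to 0. -/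
import Mathlib


open Complex Filter Asymptotics Topology

/-- If an even function `g` satisfies the polynomial condition with respect to a
polynomial `p` (in two complex variables), then it also satisfies the polynomial
condition with respect to the odd part `q(ζ) = (p(ζ) - p(-ζ))/2` of `p`. -/
theorem stmt3 (g : ℂ → ℂ) (hg_even : ∀ z, g (-z) = g z)
    (p : MvPolynomial (Fin 2) ℂ)
    (hp : ∀ R : ℂ → ℂ, R =o[𝓝[≠] (0 : ℂ)] g →
      ∀ᶠ z in 𝓝[≠] (0 : ℂ),
        0 < (MvPolynomial.eval ![z, (starRingEnd ℂ) z + g z + R z] p).im ∧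
        (MvPolynomial.eval ![z, (starRingEnd ℂ) z - g z + R z] p).im < 0) :
    ∀ R : ℂ → ℂ, R =o[𝓝[≠] (0 : ℂ)] g →
      ∀ᶠ z in 𝓝[≠] (0 : ℂ),
        0 < ((MvPolynomial.eval ![z, (starRingEnd ℂ) z + g z + R z] p
              - MvPolynomial.eval ![-z, -((starRingEnd ℂ) z + g z + R z)] p) / 2).im ∧
        ((MvPolynomial.eval ![z, (starRingEnd ℂ) z - g z + R z] p
              - MvPolynomial.eval ![-z, -((starRingEnd ℂ) z - g z + R z)] p) / 2).im < 0 := by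
  intro R hR
  have hneg : Tendsto (fun z : ℂ => -z) (𝓝[≠] (0 : ℂ)) (𝓝[≠] (0 : ℂ)) := by
    apply tendsto_nhdsWithin_of_tendsto_nhds_of_eventually_within
    · simpa using (continuous_neg.tendsto (0 : ℂ)).mono_left nhdsWithin_le_nhds
    · filter_upwards [self_mem_nhdsWithin] with z hz
      simpa using hz
  have hR' : (fun w : ℂ => -R (-w)) =o[𝓝[≠] (0 : ℂ)] g := by
    have hgc : (g ∘ fun z : ℂ => -z) = g := funext hg_even
    have h := (hR.comp_tendsto hneg).neg_left
    rw [hgc] at h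
    simpa [Function.comp] using h
  filter_upwards [hp R hR, hneg.eventually (hp _ hR')] with z h1 h2
  simp only [hg_even, map_neg, neg_neg] at h2
  have e1 : -(starRingEnd ℂ) z + g z + -R z = -((starRingEnd ℂ) z - g z + R z) := by ring
  have e2 : -(starRingEnd ℂ) z - g z + -R z = -((starRingEnd ℂ) z + g z + R z) := by ring
  rw [e1, e2] at h2
  have him : ∀ a b : ℂ, ((a - b) / 2).im = (a.im - b.im) / 2 := by
    intro a b
    simp [Complex.div_im, Complex.normSq]
  rw [him, him]
  constructor
  · linarith [h1.1, h2.2]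
  · linarith [h1.2, h2.1]
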